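/- Let H be a finite simple graph with vertex set V and edge set E(H), and let G' be the simple graph on the disjoint union V ⊔ E(H) in which: two original vertices u, v ∈ V are adjacent in G' iff they are adjacent in H; an original vertex u ∈ V and an edge-vertex e ∈ E(H) are adjacent in G' iff u is an endpoint of e; and no two edge-vertices are adjacent. Then for every natural number k: H has an independent set of size at least k if and only if there exists a set S of vertices of G' with |S| ≥ k + |E(H)| such that the subgraph of G' induced by S is triangle-free (contains no three pairwise adjacent vertices). -/

import Mathlib

/-- The graph `G'` on the disjoint union of the vertices and the edges of `H`:
two original vertices are adjacent iff they are adjacent in `H`; an original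
vertex and an edge-vertex are adjacent iff the vertex is an endpoint of the edge;
no two edge-vertices are adjacent. -/
def vertexEdgeGraph {V : Type*} (H : SimpleGraph V) : SimpleGraph (V ⊕ H.edgeSet) where
  Adj a b :=
    match a, b with
    | Sum.inl u, Sum.inl v => H.Adj u v
    | Sum.inl u, Sum.inr e => u ∈ (e : Sym2 V)
    | Sum.inr e, Sum.inl u => u ∈ (e : Sym2 V)
    | Sum.inr _, Sum.inr _ => False
  symm := by
    constructor
    rintro (u | e) (v | f) h
    · exact h.symm
    · exact h
    · exact h
    · exact h
  loopless := by
    constructor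
    rintro (u | e) h
    · exact H.irrefl h
    · exact h

theorem stmt15 {V : Type*} [Fintype V] [DecidableEq V] (H : SimpleGraph V)
    [DecidableRel H.Adj] (k : ℕ) :
    (∃ I : Finset V, (∀ u ∈ I, ∀ v ∈ I, ¬ H.Adj u v) ∧ k ≤ I.card) ↔
      (∃ S : Finset (V ⊕ H.edgeSet), k + H.edgeFinset.card ≤ S.card ∧
        ((vertexEdgeGraph H).induce (↑S : Set (V ⊕ H.edgeSet))).CliqueFree 3) := by
  classical
  constructor
  · rintro ⟨I, hI, hk⟩
    refine ⟨I.image Sum.inl ∪ Finset.univ.image Sum.inr, ?_, ?_⟩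
    · rw [Finset.card_union_of_disjoint (by simp [Finset.disjoint_left]),
        Finset.card_image_of_injective _ Sum.inl_injective,
        Finset.card_image_of_injective _ Sum.inr_injective]
      have h1 : (Finset.univ : Finset H.edgeSet).card = H.edgeFinset.card := by
        simp [SimpleGraph.edgeFinset]
      omega
    · rintro t ⟨ht, htc⟩
      obtain ⟨a, b, c, hab, hac, hbc, rfl⟩ := Finset.card_eq_three.mp htc
      have hAB := ht (by simp) (by simp) hab
      have hAC := ht (by simp) (by simp) hac
      have hBC := ht (by simp) (by simp) hbc
      obtain ⟨x | x, hx⟩ := a <;> obtain ⟨y | y, hy⟩ := b <;> obtain ⟨z | z, hz⟩ := c <;>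
        simp only [SimpleGraph.comap_adj, Function.Embedding.coe_subtype,
          vertexEdgeGraph] at hAB hAC hBC <;>
        simp only [Finset.coe_union, Finset.coe_image, Set.mem_union, Set.mem_image,
          Finset.mem_coe, Finset.coe_univ, Set.image_univ, Set.mem_range,
          Sum.inl.injEq, Sum.inr.injEq, exists_eq_right, reduceCtorEq,
          exists_false, or_false, false_or] at hx hy hz <;>
        first
        | exact hAB
        | exact hAC
        | exact hBC
        | exact hI x hx y hy hAB
        | exact hI x hx z hz hAC
        | exact hI y hy z hz hBC
  · rintro ⟨S, hcard, hfree⟩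
    set A : Finset V := Finset.univ.filter (fun u => Sum.inl u ∈ S) with hA
    set B : Finset H.edgeSet := Finset.univ.filter (fun e => Sum.inr e ∈ S) with hB
    have hScard : S.card ≤ A.card + B.card := by
      have hsub : S ⊆ A.image Sum.inl ∪ B.image Sum.inr := by
        rintro (u | e) hmem
        · exact Finset.mem_union_left _ (Finset.mem_image_of_mem _ (by simp [hA, hmem]))
        · exact Finset.mem_union_right _ (Finset.mem_image_of_mem _ (by simp [hB, hmem]))
      calc S.card ≤ (A.image Sum.inl ∪ B.image Sum.inr).card := Finset.card_le_card hsub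
        _ ≤ (A.image Sum.inl).card + (B.image Sum.inr).card := Finset.card_union_le _ _
        _ = A.card + B.card := by
            rw [Finset.card_image_of_injective _ Sum.inl_injective,
              Finset.card_image_of_injective _ Sum.inr_injective]
    set P : Finset (Sym2 V) :=
      H.edgeFinset.filter (fun e => e.out.1 ∈ A ∧ e.out.2 ∈ A) with hP
    -- triangle argument: no edge of P has its edge-vertex in S
    have hPB : ∀ e ∈ P, ∀ (he : e ∈ H.edgeSet), (⟨e, he⟩ : H.edgeSet) ∉ B := by
      intro e heP he hmemB
      obtain ⟨heE, h1, h2⟩ := Finset.mem_filter.mp heP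
      have h1' : Sum.inl e.out.1 ∈ S := (Finset.mem_filter.mp h1).2
      have h2' : Sum.inl e.out.2 ∈ S := (Finset.mem_filter.mp h2).2
      have h3' : Sum.inr (⟨e, he⟩ : H.edgeSet) ∈ S := (Finset.mem_filter.mp hmemB).2
      have hadj : H.Adj e.out.1 e.out.2 := by
        have : e ∈ H.edgeSet := he
        have hout : s(e.out.1, e.out.2) = e := by
          rw [Sym2.mk, Prod.mk.eta, e.out_eq]
        rw [← hout] at this
        exact this
      have hne : e.out.1 ≠ e.out.2 := hadj.ne
      refine hfree {⟨Sum.inl e.out.1, h1'⟩, ⟨Sum.inl e.out.2, h2'⟩, ⟨Sum.inr ⟨e, he⟩, h3'⟩} ⟨?_, ?_⟩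
      · intro p hp q hq hpq
        simp only [Finset.coe_insert, Set.mem_insert_iff, Finset.coe_singleton,
          Set.mem_singleton_iff] at hp hq
        rcases hp with rfl | rfl | rfl <;> rcases hq with rfl | rfl | rfl <;>
          first
          | exact absurd rfl hpq
          | simp only [SimpleGraph.comap_adj, Function.Embedding.coe_subtype, vertexEdgeGraph]
        · exact hadj
        · exact Sym2.out_fst_mem e
        · exact hadj.symm
        · exact Sym2.out_snd_mem e
        · exact Sym2.out_fst_mem e
        · exact Sym2.out_snd_mem e
      · rw [Finset.card_insert_of_notMem (by simp [hne]),
          Finset.card_insert_of_notMem (by simp)]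
        simp
    have hBPcard : B.card + P.card ≤ H.edgeFinset.card := by
      have : B.image Subtype.val ∪ P ⊆ H.edgeFinset := by
        intro e he
        rcases Finset.mem_union.mp he with he | he
        · obtain ⟨f, _, rfl⟩ := Finset.mem_image.mp he
          exact SimpleGraph.mem_edgeFinset.mpr f.2
        · exact (Finset.mem_filter.mp he).1
      have hdisj : Disjoint (B.image Subtype.val) P := by
        rw [Finset.disjoint_left]
        rintro e he heP
        obtain ⟨f, hfB, rfl⟩ := Finset.mem_image.mp he
        exact hPB _ heP f.2 (by simpa using hfB)
      calc B.card + P.card = (B.image Subtype.val).card + P.card := by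
            rw [Finset.card_image_of_injective _ Subtype.val_injective]
        _ = (B.image Subtype.val ∪ P).card := (Finset.card_union_of_disjoint hdisj).symm
        _ ≤ H.edgeFinset.card := Finset.card_le_card this
    -- build the independent set
    refine ⟨A \ P.image (fun e => e.out.1), ?_, ?_⟩
    · intro u hu v hv hadj
      have huA : u ∈ A := (Finset.mem_sdiff.mp hu).1
      have hvA : v ∈ A := (Finset.mem_sdiff.mp hv).1
      have hmem1 : (Quot.out s(u, v)).1 ∈ A := by
        rcases Sym2.mem_iff.mp (Sym2.out_fst_mem s(u, v)) with h | h <;> rw [h] <;> assumption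
      have hmem2 : (Quot.out s(u, v)).2 ∈ A := by
        rcases Sym2.mem_iff.mp (Sym2.out_snd_mem s(u, v)) with h | h <;> rw [h] <;> assumption
      have heP : s(u, v) ∈ P :=
        Finset.mem_filter.mpr ⟨SimpleGraph.mem_edgeFinset.mpr hadj, hmem1, hmem2⟩
      rcases Sym2.mem_iff.mp (Sym2.out_fst_mem s(u, v)) with h | h
      · exact (Finset.mem_sdiff.mp hu).2 (Finset.mem_image.mpr ⟨_, heP, h⟩)
      · exact (Finset.mem_sdiff.mp hv).2 (Finset.mem_image.mpr ⟨_, heP, h⟩)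
    · have h1 : (P.image (fun e => e.out.1)).card ≤ P.card := Finset.card_image_le
      have h2 : A.card - (P.image (fun e => e.out.1)).card ≤
          (A \ P.image (fun e => e.out.1)).card := Finset.le_card_sdiff _ _
      omega
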